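/- There exists a positive integer N such that for every m ≥ N, every integer ℓ with 1 ≤ ℓ < m/2, and every π ∈ Sym(m) with σ(π) ≤ 3m/4, the number of ℓ-element subsets of {1,…,m} that are fixed setwise by π is strictly less than (3/4)·C(m,ℓ). -/

import Mathlib

open Equiv MulAction

/-- The number of conjugacy classes of a group. -/
noncomputable def kclass (G : Type*) [Group G] : ℕ := Nat.card (ConjClasses G)

/-- The coordinate-permuting action of `Perm ι` on `ι → X`, as automorphisms. -/
def permAut (ι X : Type*) [Group X] : Perm ι →* MulAut (ι → X) where
  toFun e :=
    { toFun := fun f => f ∘ e.symm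
      invFun := fun f => f ∘ e
      left_inv := fun f => by funext i; simp
      right_inv := fun f => by funext i; simp
      map_mul' := fun f g => rfl }
  map_one' := by ext f; rfl
  map_mul' := fun e₁ e₂ => by ext f; rfl

/-- The wreath product `X ≀ H` of a group `X` with a permutation group `H ≤ Perm ι`,
i.e. the semidirect product `X^ι ⋊ H` where `H` permutes the direct factors of `X^ι`. -/
abbrev Wreath (X : Type*) [Group X] {ι : Type*} (H : Subgroup (Perm ι)) :=
  SemidirectProduct (ι → X) H ((permAut ι X).comp H.subtype)

/-- A group acting on `Ω` acts on the functions `Ω → S` by permuting coordinates. -/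
instance funMulAction (G Ω S : Type*) [Group G] [MulAction G Ω] : MulAction G (Ω → S) where
  smul g f := fun ω => f (g⁻¹ • ω)
  one_smul f := funext fun ω => by
    show f ((1 : G)⁻¹ • ω) = f ω
    rw [inv_one, one_smul]
  mul_smul g h f := funext fun ω => by
    show f ((g * h)⁻¹ • ω) = f (h⁻¹ • g⁻¹ • ω)
    rw [mul_inv_rev, mul_smul]

/-- `σ(h)`: the number of cycles of a permutation `h` in its disjoint cycle decomposition,
with fixed points counted as cycles of length 1; equivalently, the number of orbits of
the cyclic group generated by `h`. -/
noncomputable def cycleCount {ι : Type*} (h : Perm ι) : ℕ :=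
  Nat.card (orbitRel.Quotient (Subgroup.zpowers h) ι)

/-- `n(G, α)`: the number of orbits of a group action. -/
noncomputable def orbitCount (G : Type*) [Group G] (α : Type*) [MulAction G α] : ℕ :=
  Nat.card (orbitRel.Quotient G α)


lemma sum_choose_le (n L : ℕ) : ∑ i ∈ Finset.range L, n.choose i ≤ 2 ^ n := by
  rcases le_or_gt L (n + 1) with h | h
  · calc ∑ i ∈ Finset.range L, n.choose i ≤ ∑ i ∈ Finset.range (n + 1), n.choose i :=
        Finset.sum_le_sum_of_subset (Finset.range_subset_range.mpr h)
      _ = 2 ^ n := Nat.sum_range_choose n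
  · have h2 : ∑ i ∈ Finset.range L, n.choose i = ∑ i ∈ Finset.range (n + 1), n.choose i := by
      refine (Finset.sum_subset (Finset.range_subset_range.mpr (by omega)) ?_).symm
      intro i _ hi
      simp only [Finset.mem_range] at hi
      exact Nat.choose_eq_zero_of_lt (by omega)
    rw [h2, Nat.sum_range_choose]



lemma choose_mono_half {n k l : ℕ} (hkl : k ≤ l) (hl : 2 * l ≤ n) : n.choose k ≤ n.choose l := by
  induction l with
  | zero =>
    obtain rfl : k = 0 := by omega
    exact le_rfl
  | succ l ih =>
    rcases Nat.lt_or_ge k (l + 1) with h | h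
    · have h1 : n.choose k ≤ n.choose l := ih (by omega) (by omega)
      have h2 : n.choose l ≤ n.choose (l + 1) :=
        Nat.choose_le_succ_of_lt_half_left (by omega)
      omega
    · obtain rfl : k = l + 1 := by omega
      exact le_rfl

-- L3
lemma ratio_choose {a M : ℕ} (h : 4 * a ≤ 3 * M) :
    ∀ l, 4 ^ l * a.choose l ≤ 3 ^ l * M.choose l := by
  intro l
  induction l with
  | zero => simp
  | succ l ih =>
    have key : 4 * (a - l) ≤ 3 * (M - l) := by omega
    have h1 := Nat.choose_succ_right_eq a l
    have h2 := Nat.choose_succ_right_eq M l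
    have main : 4 ^ (l + 1) * a.choose (l + 1) * (l + 1) ≤
        3 ^ (l + 1) * M.choose (l + 1) * (l + 1) := by
      calc 4 ^ (l + 1) * a.choose (l + 1) * (l + 1)
          = 4 ^ l * 4 * (a.choose (l + 1) * (l + 1)) := by ring
        _ = 4 ^ l * 4 * (a.choose l * (a - l)) := by rw [h1]
        _ = (4 ^ l * a.choose l) * (4 * (a - l)) := by ring
        _ ≤ (3 ^ l * M.choose l) * (3 * (M - l)) := Nat.mul_le_mul ih key
        _ = 3 ^ l * 3 * (M.choose l * (M - l)) := by ring
        _ = 3 ^ l * 3 * (M.choose (l + 1) * (l + 1)) := by rw [h2]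
        _ = 3 ^ (l + 1) * M.choose (l + 1) * (l + 1) := by ring
    exact Nat.le_of_mul_le_mul_right main (by omega)

-- geometric sum for 5
lemma five_geom (l : ℕ) : 4 * ∑ j ∈ Finset.range l, 5 ^ j + 1 = 5 ^ l := by
  induction l with
  | zero => simp
  | succ l ih => rw [Finset.sum_range_succ, pow_succ]; omega

-- L4
lemma geom_bound {a l : ℕ} (h6 : 6 * l ≤ a) (hl : 1 ≤ l) :
    4 * (∑ j ∈ Finset.range l, a.choose (j + 1)) ≤ 5 * a.choose l := by
  have step : ∀ k, k + 1 ≤ l → 5 * a.choose k ≤ a.choose (k + 1) := by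
    intro k hk
    have h1 := Nat.choose_succ_right_eq a k
    have hak : 5 * (k + 1) ≤ a - k := by omega
    have main : 5 * a.choose k * (k + 1) ≤ a.choose (k + 1) * (k + 1) := by
      calc 5 * a.choose k * (k + 1) = a.choose k * (5 * (k + 1)) := by ring
        _ ≤ a.choose k * (a - k) := Nat.mul_le_mul_left _ hak
        _ = a.choose (k + 1) * (k + 1) := h1.symm
    exact Nat.le_of_mul_le_mul_right main (by omega)
  have aux : ∀ d k, k + d = l → 1 ≤ k → a.choose k * 5 ^ d ≤ a.choose l := by
    intro d
    induction d with
    | zero =>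
      intro k hk _
      obtain rfl : k = l := by omega
      simp
    | succ d ih =>
      intro k hk hk1
      calc a.choose k * 5 ^ (d + 1) = (5 * a.choose k) * 5 ^ d := by ring
        _ ≤ a.choose (k + 1) * 5 ^ d := Nat.mul_le_mul_right _ (step k (by omega))
        _ ≤ a.choose l := ih (k + 1) (by omega) (by omega)
  have sum_le : (∑ j ∈ Finset.range l, a.choose (j + 1)) * 5 ^ (l - 1) ≤
      a.choose l * ∑ j ∈ Finset.range l, 5 ^ j := by
    rw [Finset.sum_mul, Finset.mul_sum]
    apply Finset.sum_le_sum
    intro j hj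
    have hjl : j + 1 ≤ l := Finset.mem_range.mp hj
    have hsplit : (5:ℕ) ^ (l - 1) = 5 ^ (l - 1 - j) * 5 ^ j := by
      rw [← pow_add]; congr 1; omega
    calc a.choose (j + 1) * 5 ^ (l - 1) = (a.choose (j + 1) * 5 ^ (l - 1 - j)) * 5 ^ j := by
          rw [hsplit]; ring
      _ ≤ a.choose l * 5 ^ j :=
          Nat.mul_le_mul_right _ (aux (l - 1 - j) (j + 1) (by omega) (by omega))
  have final : (4 * ∑ j ∈ Finset.range l, a.choose (j + 1)) * 5 ^ (l - 1) ≤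
      (5 * a.choose l) * 5 ^ (l - 1) := by
    calc (4 * ∑ j ∈ Finset.range l, a.choose (j + 1)) * 5 ^ (l - 1)
        = 4 * ((∑ j ∈ Finset.range l, a.choose (j + 1)) * 5 ^ (l - 1)) := by ring
      _ ≤ 4 * (a.choose l * ∑ j ∈ Finset.range l, 5 ^ j) := Nat.mul_le_mul_left _ sum_le
      _ = a.choose l * (4 * ∑ j ∈ Finset.range l, 5 ^ j) := by ring
      _ ≤ a.choose l * 5 ^ l := Nat.mul_le_mul_left _ (by have := five_geom l; omega)
      _ = (5 * a.choose l) * 5 ^ (l - 1) := by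
          have : (5:ℕ) ^ l = 5 * 5 ^ (l - 1) := by
            conv_lhs => rw [show l = (l - 1) + 1 by omega]
            rw [pow_succ]; ring
          rw [this]; ring
  exact Nat.le_of_mul_le_mul_right final (by positivity)




-- L6
lemma e89 {n : ℕ} (hn : 40 ≤ n) : 240 * 8 ^ n < 9 * 9 ^ n := by
  induction n, hn using Nat.le_induction with
  | base => norm_num
  | succ n hn ih =>
    calc 240 * 8 ^ (n + 1) = 8 * (240 * 8 ^ n) := by ring
      _ < 8 * (9 * 9 ^ n) := by omega
      _ ≤ 9 * 9 ^ (n + 1) := by ring_nf; nlinarith [pow_pos (by norm_num : (0:ℕ) < 9) n]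

-- aux for L7
lemma three_four {k : ℕ} (hk : 4 ≤ k) : 3 ^ (k + 1) ≤ 4 ^ k := by
  induction k, hk using Nat.le_induction with
  | base => norm_num
  | succ k hk ih =>
    calc (3:ℕ) ^ (k + 2) = 3 * 3 ^ (k + 1) := by ring
      _ ≤ 3 * 4 ^ k := by omega
      _ ≤ 4 ^ (k + 1) := by rw [pow_succ]; omega

-- L7
lemma l34 {l : ℕ} (hl : 9 ≤ l) : 4 * l * 3 ^ l < 3 * 4 ^ l := by
  induction l, hl using Nat.le_induction with
  | base => norm_num
  | succ l hl ih =>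
    have h1 : 3 ^ l ≤ 4 ^ (l - 1) := by
      have := three_four (k := l - 1) (by omega)
      have e : l - 1 + 1 = l := by omega
      rwa [e] at this
    have e4 : (4:ℕ) ^ l = 4 * 4 ^ (l - 1) := by
      conv_lhs => rw [show l = (l - 1) + 1 by omega]
      rw [pow_succ]; ring
    calc 4 * (l + 1) * 3 ^ (l + 1) = 3 * (4 * l * 3 ^ l) + 12 * 3 ^ l := by ring
      _ < 3 * (3 * 4 ^ l) + 12 * 3 ^ l := by omega
      _ ≤ 9 * 4 ^ l + 12 * 4 ^ (l - 1) := by omega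
      _ = 9 * 4 ^ l + 3 * 4 ^ l := by rw [e4]; ring
      _ = 3 * 4 ^ (l + 1) := by rw [pow_succ]; ring

-- L8
lemma l53 {l : ℕ} (hl : 2 ≤ l) : 5 * 3 ^ l < 3 * 4 ^ l := by
  induction l, hl using Nat.le_induction with
  | base => norm_num
  | succ l hl ih =>
    calc 5 * 3 ^ (l + 1) = 3 * (5 * 3 ^ l) := by ring
      _ < 3 * (3 * 4 ^ l) := by omega
      _ ≤ 3 * 4 ^ (l + 1) := by rw [pow_succ]; omega


lemma choose_step {n : ℕ} (hn : 10 ≤ n) :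
    9 * Nat.choose (4 * n) n ≤ Nat.choose (4 * (n + 1)) (n + 1) := by
  have f1 : Nat.choose (4 * n) n * Nat.factorial n * Nat.factorial (3 * n) =
      Nat.factorial (4 * n) := by
    have := Nat.choose_mul_factorial_mul_factorial (n := 4 * n) (k := n) (by omega)
    rwa [show 4 * n - n = 3 * n by omega] at this
  have f2 : Nat.choose (4 * (n + 1)) (n + 1) * Nat.factorial (n + 1) *
      Nat.factorial (3 * n + 3) = Nat.factorial (4 * n + 4) := by
    have := Nat.choose_mul_factorial_mul_factorial (n := 4 * (n + 1)) (k := n + 1) (by omega)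
    rwa [show 4 * (n + 1) - (n + 1) = 3 * n + 3 by omega,
      show 4 * (n + 1) = 4 * n + 4 by omega] at this
  have poly : 9 * ((n + 1) * ((3 * n + 1) * ((3 * n + 2) * (3 * n + 3)))) ≤
      (4 * n + 1) * ((4 * n + 2) * ((4 * n + 3) * (4 * n + 4))) := by
    obtain ⟨t, rfl⟩ : ∃ t, n = t + 10 := ⟨n - 10, by omega⟩
    ring_nf
    nlinarith [sq_nonneg t, t.zero_le]
  have key : 9 * Nat.choose (4 * n) n * (Nat.factorial (n + 1) * Nat.factorial (3 * n + 3)) ≤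
      Nat.choose (4 * (n + 1)) (n + 1) * (Nat.factorial (n + 1) * Nat.factorial (3 * n + 3)) := by
    have e1 : Nat.factorial (n + 1) = (n + 1) * Nat.factorial n := Nat.factorial_succ n
    have e2 : Nat.factorial (3 * n + 3) =
        (3 * n + 3) * ((3 * n + 2) * ((3 * n + 1) * Nat.factorial (3 * n))) := by
      rw [show 3 * n + 3 = (3 * n + 2) + 1 by omega, Nat.factorial_succ,
        show 3 * n + 2 = (3 * n + 1) + 1 by omega, Nat.factorial_succ,
        show 3 * n + 1 = (3 * n) + 1 by omega, Nat.factorial_succ]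
    have e3 : Nat.factorial (4 * n + 4) =
        (4 * n + 4) * ((4 * n + 3) * ((4 * n + 2) * ((4 * n + 1) * Nat.factorial (4 * n)))) := by
      rw [show 4 * n + 4 = (4 * n + 3) + 1 by omega, Nat.factorial_succ,
        show 4 * n + 3 = (4 * n + 2) + 1 by omega, Nat.factorial_succ,
        show 4 * n + 2 = (4 * n + 1) + 1 by omega, Nat.factorial_succ,
        show 4 * n + 1 = (4 * n) + 1 by omega, Nat.factorial_succ]
    calc 9 * Nat.choose (4 * n) n * (Nat.factorial (n + 1) * Nat.factorial (3 * n + 3))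
        = (9 * ((n + 1) * ((3 * n + 1) * ((3 * n + 2) * (3 * n + 3))))) *
          (Nat.choose (4 * n) n * Nat.factorial n * Nat.factorial (3 * n)) := by
          rw [e1, e2]; ring
      _ = (9 * ((n + 1) * ((3 * n + 1) * ((3 * n + 2) * (3 * n + 3))))) *
          Nat.factorial (4 * n) := by rw [f1]
      _ ≤ ((4 * n + 1) * ((4 * n + 2) * ((4 * n + 3) * (4 * n + 4)))) *
          Nat.factorial (4 * n) := Nat.mul_le_mul_right _ poly
      _ = Nat.factorial (4 * n + 4) := by rw [e3]; ring
      _ = Nat.choose (4 * (n + 1)) (n + 1) * (Nat.factorial (n + 1) *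
          Nat.factorial (3 * n + 3)) := by rw [← f2]; ring
  have hpos : 0 < Nat.factorial (n + 1) * Nat.factorial (3 * n + 3) :=
    Nat.mul_pos (Nat.factorial_pos _) (Nat.factorial_pos _)
  calc 9 * Nat.choose (4 * n) n
      = 9 * Nat.choose (4 * n) n := rfl
    _ ≤ Nat.choose (4 * (n + 1)) (n + 1) := Nat.le_of_mul_le_mul_right key hpos


lemma c4010 : Nat.choose 40 10 = 847660528 := by rfl


-- L5
lemma nine_pow_le {n : ℕ} (hn : 10 ≤ n) : 9 ^ n ≤ 5 * Nat.choose (4 * n) n := by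
  induction n, hn using Nat.le_induction with
  | base => rw [show 4 * 10 = 40 by rfl, c4010]; norm_num
  | succ n hn ih =>
    calc (9:ℕ) ^ (n + 1) = 9 * 9 ^ n := by ring
      _ ≤ 9 * (5 * Nat.choose (4 * n) n) := Nat.mul_le_mul_left _ ih
      _ = 5 * (9 * Nat.choose (4 * n) n) := by ring
      _ ≤ 5 * Nat.choose (4 * (n + 1)) (n + 1) := Nat.mul_le_mul_left _ (choose_step hn)




lemma perm_zpow_mem {m : ℕ} (π : Perm (Fin m)) {s : Finset (Fin m)} (hs : s.image π = s) :
    ∀ (k : ℤ) (x : Fin m), x ∈ s → (π ^ k) x ∈ s := by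
  have hfwd : ∀ x ∈ s, π x ∈ s := by
    intro x hx
    have h2 : π x ∈ s.image π := Finset.mem_image_of_mem π hx
    rwa [hs] at h2
  have hbwd : ∀ x ∈ s, π⁻¹ x ∈ s := by
    intro x hx
    rw [← hs] at hx
    rcases Finset.mem_image.mp hx with ⟨y, hy, hyx⟩
    have h : π⁻¹ x = y := by rw [← hyx]; exact Equiv.symm_apply_apply π y
    rwa [h]
  intro k
  induction k using Int.induction_on with
  | zero => intro x hx; simpa using hx
  | succ k ih =>
    intro x hx
    have h : π ^ ((k : ℤ) + 1) = π ^ (k : ℤ) * π := zpow_add_one π k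
    rw [h, Equiv.Perm.mul_apply]
    exact ih (π x) (hfwd x hx)
  | pred k ih =>
    intro x hx
    have h : π ^ (-(k : ℤ) - 1) = π ^ (-(k : ℤ)) * π⁻¹ := zpow_sub_one π (-k)
    rw [h, Equiv.Perm.mul_apply]
    exact ih (π⁻¹ x) (hbwd x hx)

lemma count_le_sum {m ℓ : ℕ} (π : Perm (Fin m)) (hℓ : 1 ≤ ℓ) :
    Nat.card {s : Finset (Fin m) // s.card = ℓ ∧ s.image π = s} ≤
      ∑ j ∈ Finset.range ℓ, (cycleCount π).choose (j + 1) := by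
  classical
  set Q := orbitRel.Quotient (Subgroup.zpowers π) (Fin m) with hQ
  letI : Fintype Q := Fintype.ofFinite Q
  have key : ∀ s : Finset (Fin m), s.image π = s → ∀ x : Fin m,
      x ∈ s ↔ (Quotient.mk'' x : Q) ∈ s.image (Quotient.mk'') := by
    intro s hs x
    constructor
    · exact fun hx => Finset.mem_image_of_mem _ hx
    · intro hx
      rcases Finset.mem_image.mp hx with ⟨y, hy, hyx⟩
      have hr := (orbitRel (Subgroup.zpowers π) (Fin m)).symm' (Quotient.eq''.mp hyx)
      rw [MulAction.orbitRel_apply] at hr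
      rcases MulAction.mem_orbit_iff.mp hr with ⟨⟨g, hg⟩, hgx⟩
      rcases Subgroup.mem_zpowers_iff.mp hg with ⟨k, rfl⟩
      have hx' : (π ^ k) y = x := hgx
      rw [← hx']
      exact perm_zpow_mem π hs k y hy
  let F : {s : Finset (Fin m) // s.card = ℓ ∧ s.image π = s} →
      {T : Finset Q // T.Nonempty ∧ T.card ≤ ℓ} := fun s =>
    ⟨s.1.image (Quotient.mk''), by
      obtain ⟨h1, h2⟩ := s.2
      refine ⟨Finset.Nonempty.image ?_ _, le_trans (Finset.card_image_le) (le_of_eq h1)⟩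
      rw [← Finset.card_pos, h1]; omega⟩
  have hF : Function.Injective F := by
    intro s t hst
    have h' : s.1.image (Quotient.mk'') = t.1.image (Quotient.mk'') :=
      congrArg Subtype.val hst
    apply Subtype.ext
    ext x
    rw [key s.1 s.2.2 x, key t.1 t.2.2 x, h']
  calc Nat.card {s : Finset (Fin m) // s.card = ℓ ∧ s.image π = s}
      ≤ Nat.card {T : Finset Q // T.Nonempty ∧ T.card ≤ ℓ} :=
        Nat.card_le_card_of_injective F hF
    _ = (Finset.univ.filter (fun T : Finset Q => T.Nonempty ∧ T.card ≤ ℓ)).card := by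
        rw [Nat.card_eq_fintype_card, Fintype.card_subtype]
    _ ≤ ((Finset.range ℓ).biUnion
          (fun j => Finset.powersetCard (j + 1) (Finset.univ : Finset Q))).card := by
        apply Finset.card_le_card
        intro T hT
        simp only [Finset.mem_filter] at hT
        obtain ⟨-, hne, hcard⟩ := hT
        have h1 : 1 ≤ T.card := Finset.card_pos.mpr hne
        apply Finset.mem_biUnion.mpr
        refine ⟨T.card - 1, Finset.mem_range.mpr (by omega), ?_⟩
        rw [Finset.mem_powersetCard]
        exact ⟨Finset.subset_univ T, by omega⟩
    _ ≤ ∑ j ∈ Finset.range ℓ, (Finset.powersetCard (j + 1) (Finset.univ : Finset Q)).card :=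
        Finset.card_biUnion_le
    _ = ∑ j ∈ Finset.range ℓ, (cycleCount π).choose (j + 1) := by
        apply Finset.sum_congr rfl
        intro j _
        rw [Finset.card_powersetCard, Finset.card_univ, cycleCount, Nat.card_eq_fintype_card]





lemma fixed_zpow {m : ℕ} {π : Perm (Fin m)} {x : Fin m} (hx : π x = x) (k : ℤ) :
    (π ^ k) x = x := by
  have hs : ({x} : Finset (Fin m)).image π = {x} := by
    rw [Finset.image_singleton, hx]
  have := perm_zpow_mem π hs k x (Finset.mem_singleton_self x)
  simpa using this

lemma cycleCount_one {m : ℕ} : cycleCount (1 : Perm (Fin m)) = m := by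
  have hbij : Function.Bijective
      (Quotient.mk'' : Fin m → orbitRel.Quotient (Subgroup.zpowers (1 : Perm (Fin m))) (Fin m)) := by
    constructor
    · intro x y h
      have hr := Quotient.eq''.mp h
      rw [MulAction.orbitRel_apply] at hr
      rcases MulAction.mem_orbit_iff.mp hr with ⟨⟨g, hg⟩, hgx⟩
      rcases Subgroup.mem_zpowers_iff.mp hg with ⟨k, rfl⟩
      have : ((1 : Perm (Fin m)) ^ k) y = x := hgx
      rw [one_zpow, Equiv.Perm.one_apply] at this
      exact this.symm
    · exact fun q => Quotient.inductionOn' q (fun x => ⟨x, rfl⟩)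
  have := Nat.card_eq_of_bijective _ hbij
  rw [cycleCount, ← this, Nat.card_eq_fintype_card, Fintype.card_fin]

lemma count_one_le {m : ℕ} (π : Perm (Fin m)) (hπ : π ≠ 1) :
    Nat.card {s : Finset (Fin m) // s.card = 1 ∧ s.image π = s} + 1 ≤ cycleCount π := by
  classical
  set Q := orbitRel.Quotient (Subgroup.zpowers π) (Fin m) with hQ
  letI : Fintype Q := Fintype.ofFinite Q
  obtain ⟨x₀, hx₀⟩ : ∃ x, π x ≠ x := by
    by_contra h
    push_neg at h
    exact hπ (Equiv.ext fun x => (h x).trans (Equiv.Perm.one_apply x).symm)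
  -- every invariant singleton gives a fixed point
  have hex : ∀ s : {s : Finset (Fin m) // s.card = 1 ∧ s.image π = s},
      ∃ x : Fin m, s.1 = {x} ∧ π x = x := by
    rintro ⟨s, h1, h2⟩
    rcases Finset.card_eq_one.mp h1 with ⟨x, rfl⟩
    refine ⟨x, rfl, ?_⟩
    have : π x ∈ ({x} : Finset (Fin m)) := by
      rw [← h2]; exact Finset.mem_image_of_mem π (Finset.mem_singleton_self x)
    simpa using this
  choose g hg1 hg2 using hex
  -- the orbit classes of fixed points avoid the class of x₀
  have hfix_ne : ∀ {x : Fin m}, π x = x → (Quotient.mk'' x : Q) ≠ Quotient.mk'' x₀ := by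
    intro x hx h
    have hr := Quotient.eq''.mp h
    rw [MulAction.orbitRel_apply] at hr
    have hr' := (orbitRel (Subgroup.zpowers π) (Fin m)).symm'
      (by rwa [MulAction.orbitRel_apply])
    rw [MulAction.orbitRel_apply] at hr'
    rcases MulAction.mem_orbit_iff.mp hr' with ⟨⟨u, hu⟩, hux⟩
    rcases Subgroup.mem_zpowers_iff.mp hu with ⟨k, rfl⟩
    have h1 : (π ^ k) x = x₀ := hux
    rw [fixed_zpow hx k] at h1
    rw [h1] at hx
    exact hx₀ hx
  set F : {s : Finset (Fin m) // s.card = 1 ∧ s.image π = s} → Q :=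
    fun s => Quotient.mk'' (g s) with hF
  have hFinj : Function.Injective F := by
    intro s t hst
    have hr := (orbitRel (Subgroup.zpowers π) (Fin m)).symm' (Quotient.eq''.mp hst)
    rw [MulAction.orbitRel_apply] at hr
    rcases MulAction.mem_orbit_iff.mp hr with ⟨⟨u, hu⟩, hux⟩
    rcases Subgroup.mem_zpowers_iff.mp hu with ⟨k, rfl⟩
    have h1 : (π ^ k) (g s) = g t := hux
    rw [fixed_zpow (hg2 s) k] at h1
    apply Subtype.ext
    rw [hg1 s, hg1 t, h1]
  letI : Fintype {s : Finset (Fin m) // s.card = 1 ∧ s.image π = s} := Fintype.ofFinite _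
  have h1 : (Finset.univ.image F).card ≤ ((Finset.univ : Finset Q).erase
      (Quotient.mk'' x₀)).card := by
    apply Finset.card_le_card
    intro q hq
    rcases Finset.mem_image.mp hq with ⟨s, _, rfl⟩
    exact Finset.mem_erase.mpr ⟨hfix_ne (hg2 s), Finset.mem_univ _⟩
  rw [Finset.card_erase_of_mem (Finset.mem_univ _), Finset.card_univ] at h1
  rw [Finset.card_image_of_injective _ hFinj, Finset.card_univ] at h1
  have hQpos : 0 < Fintype.card Q := Fintype.card_pos_iff.mpr ⟨Quotient.mk'' x₀⟩
  have e1 : cycleCount π = Fintype.card Q := by rw [cycleCount, Nat.card_eq_fintype_card]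
  have e2 : Nat.card {s : Finset (Fin m) // s.card = 1 ∧ s.image π = s} =
      Fintype.card {s : Finset (Fin m) // s.card = 1 ∧ s.image π = s} :=
    Nat.card_eq_fintype_card
  omega

/-- There is `N` such that for all `m ≥ N`, `1 ≤ ℓ < m/2` and `π ∈ Sym(m)` with
`σ(π) ≤ 3m/4`, the number of `ℓ`-subsets of `{1,…,m}` fixed setwise by `π` is less than
`(3/4) C(m,ℓ)`. -/
theorem statement13 :
    ∃ N : ℕ, 0 < N ∧ ∀ m : ℕ, N ≤ m → ∀ ℓ : ℕ, 1 ≤ ℓ → 2 * ℓ < m →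
      ∀ π : Perm (Fin m), (cycleCount π : ℝ) ≤ 3 * (m : ℝ) / 4 →
      (Nat.card {s : Finset (Fin m) // s.card = ℓ ∧ s.image π = s} : ℝ) <
        (3 / 4 : ℝ) * (m.choose ℓ : ℝ) := by
  refine ⟨67108864, by norm_num, ?_⟩
  intro m hm ℓ hℓ1 hℓm π hσ
  set c := cycleCount π with hc
  have hc3 : 4 * c ≤ 3 * m := by
    have h : ((4 * c : ℕ) : ℝ) ≤ ((3 * m : ℕ) : ℝ) := by push_cast; linarith
    exact_mod_cast h
  set cnt := Nat.card {s : Finset (Fin m) // s.card = ℓ ∧ s.image π = s} with hcnt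
  have hCpos : 0 < m.choose ℓ := Nat.choose_pos (by omega)
  suffices h : 4 * cnt < 3 * m.choose ℓ by
    have h' : ((4 * cnt : ℕ) : ℝ) < ((3 * m.choose ℓ : ℕ) : ℝ) := by exact_mod_cast h
    push_cast at h'
    linarith
  rcases eq_or_lt_of_le hℓ1 with h1 | hℓ2'
  · -- ℓ = 1
    obtain rfl : ℓ = 1 := h1.symm
    have hπ1 : π ≠ 1 := by
      intro h
      rw [h, cycleCount_one] at hc
      omega
    have h7 : cnt + 1 ≤ c := by
      rw [hcnt, hc]
      exact count_one_le π hπ1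
    rw [Nat.choose_one_right]
    omega
  · -- 2 ≤ ℓ
    have hℓ2 : 2 ≤ ℓ := hℓ2'
    have hA : cnt ≤ ∑ j ∈ Finset.range ℓ, c.choose (j + 1) := by
      rw [hcnt, hc]
      exact count_le_sum π hℓ1
    set A := ∑ j ∈ Finset.range ℓ, c.choose (j + 1) with hAdef
    by_cases h6 : 6 * ℓ ≤ c
    · -- geometric case
      have g1 : 4 * A ≤ 5 * c.choose ℓ := geom_bound h6 (by omega)
      have g2 : 4 ^ ℓ * c.choose ℓ ≤ 3 ^ ℓ * m.choose ℓ := ratio_choose (by omega) ℓ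
      have g3 : 5 * 3 ^ ℓ < 3 * 4 ^ ℓ := l53 hℓ2
      have main : 4 ^ ℓ * (4 * cnt) < 4 ^ ℓ * (3 * m.choose ℓ) := by
        calc 4 ^ ℓ * (4 * cnt) ≤ 4 ^ ℓ * (4 * A) :=
            Nat.mul_le_mul_left _ (Nat.mul_le_mul_left _ hA)
          _ ≤ 4 ^ ℓ * (5 * c.choose ℓ) := Nat.mul_le_mul_left _ g1
          _ = 5 * (4 ^ ℓ * c.choose ℓ) := by ring
          _ ≤ 5 * (3 ^ ℓ * m.choose ℓ) := Nat.mul_le_mul_left _ g2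
          _ = (5 * 3 ^ ℓ) * m.choose ℓ := by ring
          _ < (3 * 4 ^ ℓ) * m.choose ℓ := mul_lt_mul_of_pos_right g3 hCpos
          _ = 4 ^ ℓ * (3 * m.choose ℓ) := by ring
      exact Nat.lt_of_mul_lt_mul_left main
    · by_cases h9 : 9 ≤ ℓ
      · by_cases hmid : 8 * ℓ ≤ 3 * m
        · -- middle case
          set S := 3 * m / 4 with hS
          have hcS : c ≤ S := by omega
          have h4S : 4 * S ≤ 3 * m := by omega
          have h2ℓS : 2 * ℓ ≤ S := by omega
          have hAS : A ≤ ℓ * S.choose ℓ := by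
            calc A ≤ ∑ j ∈ Finset.range ℓ, S.choose (j + 1) :=
                Finset.sum_le_sum (fun j _ => Nat.choose_le_choose _ hcS)
              _ ≤ ∑ j ∈ Finset.range ℓ, S.choose ℓ :=
                Finset.sum_le_sum (fun j hj =>
                  choose_mono_half (Finset.mem_range.mp hj) h2ℓS)
              _ = ℓ * S.choose ℓ := by
                rw [Finset.sum_const, Finset.card_range, smul_eq_mul]
          have g2 : 4 ^ ℓ * S.choose ℓ ≤ 3 ^ ℓ * m.choose ℓ := ratio_choose h4S ℓ
          have g3 : 4 * ℓ * 3 ^ ℓ < 3 * 4 ^ ℓ := l34 h9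
          have main : 4 ^ ℓ * (4 * cnt) < 4 ^ ℓ * (3 * m.choose ℓ) := by
            calc 4 ^ ℓ * (4 * cnt) ≤ 4 ^ ℓ * (4 * (ℓ * S.choose ℓ)) :=
                Nat.mul_le_mul_left _ (Nat.mul_le_mul_left _ (le_trans hA hAS))
              _ = (4 * ℓ) * (4 ^ ℓ * S.choose ℓ) := by ring
              _ ≤ (4 * ℓ) * (3 ^ ℓ * m.choose ℓ) := Nat.mul_le_mul_left _ g2
              _ = (4 * ℓ * 3 ^ ℓ) * m.choose ℓ := by ring
              _ < (3 * 4 ^ ℓ) * m.choose ℓ := mul_lt_mul_of_pos_right g3 hCpos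
              _ = 4 ^ ℓ * (3 * m.choose ℓ) := by ring
          exact Nat.lt_of_mul_lt_mul_left main
        · -- big case
          set n := m / 4 with hn
          have hn40 : 40 ≤ n := by omega
          have hn10 : 10 ≤ n := by omega
          have hnℓ : n ≤ ℓ := by omega
          have hA2 : A + 1 ≤ 2 ^ c := by
            have hs := sum_choose_le c (ℓ + 1)
            have e := Finset.sum_range_succ' (fun i => c.choose i) ℓ
            simp only [Nat.choose_zero_right] at e
            rw [← hAdef] at e
            calc A + 1 = ∑ i ∈ Finset.range (ℓ + 1), c.choose i := e.symm
              _ ≤ 2 ^ c := hs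
          have hc3n : c ≤ 3 * n + 2 := by omega
          have h2c : (2:ℕ) ^ c ≤ 4 * 8 ^ n := by
            calc (2:ℕ) ^ c ≤ 2 ^ (3 * n + 2) := Nat.pow_le_pow_right (by norm_num) hc3n
              _ = 4 * 8 ^ n := by rw [pow_add, pow_mul]; norm_num [Nat.mul_comm]
          have h5 := nine_pow_le hn10
          have h6' := e89 hn40
          have hcc : Nat.choose (4 * n) n ≤ m.choose ℓ :=
            le_trans (Nat.choose_le_choose n (by omega)) (choose_mono_half hnℓ (by omega))
          have main : 60 * cnt < 45 * m.choose ℓ := by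
            calc 60 * cnt ≤ 60 * A := Nat.mul_le_mul_left _ hA
              _ ≤ 60 * 2 ^ c := Nat.mul_le_mul_left _ (le_trans (Nat.le_succ A) hA2)
              _ ≤ 60 * (4 * 8 ^ n) := Nat.mul_le_mul_left _ h2c
              _ = 240 * 8 ^ n := by ring
              _ < 9 * 9 ^ n := h6'
              _ ≤ 9 * (5 * Nat.choose (4 * n) n) := Nat.mul_le_mul_left _ h5
              _ = 45 * Nat.choose (4 * n) n := by ring
              _ ≤ 45 * m.choose ℓ := Nat.mul_le_mul_left _ hcc
          linarith
      · -- tiny case : 2 ≤ ℓ ≤ 8, c < 6 * ℓ ≤ 48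
        have hc47 : c ≤ 47 := by omega
        have hA2 : A + 1 ≤ 2 ^ c := by
          have hs := sum_choose_le c (ℓ + 1)
          have e := Finset.sum_range_succ' (fun i => c.choose i) ℓ
          simp only [Nat.choose_zero_right] at e
          rw [← hAdef] at e
          calc A + 1 = ∑ i ∈ Finset.range (ℓ + 1), c.choose i := e.symm
            _ ≤ 2 ^ c := hs
        have h2c : (2:ℕ) ^ c ≤ 2 ^ 47 := Nat.pow_le_pow_right (by norm_num) hc47
        have hch : Nat.choose 67108864 2 ≤ m.choose ℓ :=
          le_trans (Nat.choose_le_choose 2 hm) (choose_mono_half hℓ2 (by omega))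
        have hval : 4 * 2 ^ 47 < 3 * Nat.choose 67108864 2 := by
          rw [Nat.choose_two_right]
          norm_num
        have hAcnt : cnt ≤ A := hA
        linarith
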